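/- (Theorem 2, lower bound: I-W coding theorem for i.i.d. sequence sources.) Let D ≥ 2 be an integer, let p : Fin N → ℝ with p i > 0 and ∑ i, p i = 1, let w : Fin N → ℝ with w i > 0, and let n ≥ 1. For sequences x : Fin n → Fin N set p(x) = ∏ k, p (x k) and w(x) = ∏ k, w (x k). Then for every length assignment l : (Fin n → Fin N) → ℕ satisfying Kraft's inequality ∑_x (D : ℝ)^(-(l x : ℝ)) ≤ 1, the per-symbol I-W expected codeword length satisfies (1/n) * ∑_x p(x) * w(x) * (l x : ℝ) ≥ (H_w(X))^(n-1) * 𝓛(w,X), where H_w(X) = ∑ i, p i * w i and 𝓛(w,X) = -∑ i, p i * w i * log_D (p i * w i / H_w(X)). -/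

import Mathlib

open Finset

private lemma sum_prod_pi' {N n : ℕ} (F : Fin n → Fin N → ℝ) :
    ∑ x : Fin n → Fin N, ∏ k, F k (x k) = ∏ k, ∑ i, F k i := by
  rw [Finset.prod_univ_sum, Fintype.piFinset_univ]

private lemma marginal' {N n : ℕ} (f G : Fin N → ℝ) (k : Fin n) :
    ∑ x : Fin n → Fin N, (∏ j, f (x j)) * G (x k)
      = (∑ i, f i * G i) * (∑ i, f i) ^ (n - 1) := by
  have h1 : ∀ x : Fin n → Fin N,
      (∏ j, f (x j)) * G (x k)
        = ∏ j, (if j = k then f (x j) * G (x j) else f (x j)) := by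
    intro x
    rw [← Finset.mul_prod_erase Finset.univ
        (fun j => if j = k then f (x j) * G (x j) else f (x j)) (mem_univ k),
      if_pos rfl,
      Finset.prod_congr rfl
        (fun j hj => if_neg (Finset.ne_of_mem_erase hj)),
      ← Finset.mul_prod_erase Finset.univ (fun j => f (x j)) (mem_univ k)]
    ring
  have h2 : ∀ j : Fin n, (∑ i, if j = k then f i * G i else f i)
      = if j = k then ∑ i, f i * G i else ∑ i, f i := by
    intro j; by_cases h : j = k <;> simp [h]
  calc ∑ x : Fin n → Fin N, (∏ j, f (x j)) * G (x k)
      = ∑ x : Fin n → Fin N, ∏ j, (if j = k then f (x j) * G (x j) else f (x j)) :=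
        Finset.sum_congr rfl fun x _ => h1 x
    _ = ∏ j, ∑ i, (if j = k then f i * G i else f i) :=
        sum_prod_pi' fun j i => if j = k then f i * G i else f i
    _ = ∏ j, (if j = k then ∑ i, f i * G i else ∑ i, f i) :=
        Finset.prod_congr rfl fun j _ => h2 j
    _ = (∑ i, f i * G i) * (∑ i, f i) ^ (n - 1) := ?_
  rw [← Finset.mul_prod_erase Finset.univ _ (mem_univ k), if_pos rfl,
    Finset.prod_congr rfl (fun j hj => if_neg (Finset.ne_of_mem_erase hj)),
    Finset.prod_const, Finset.card_erase_of_mem (mem_univ k), Finset.card_univ,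
    Fintype.card_fin]

private lemma gibbs' {α : Type*} [Fintype α] (q r : α → ℝ)
    (hq : ∀ x, 0 < q x) (hr : ∀ x, 0 < r x)
    (hsum : ∑ x, r x ≤ ∑ x, q x) :
    ∑ x, q x * Real.log (r x) ≤ ∑ x, q x * Real.log (q x) := by
  have key : ∑ x, q x * (Real.log (r x) - Real.log (q x)) ≤ 0 := by
    have h1 : ∀ x : α, q x * (Real.log (r x) - Real.log (q x)) ≤ r x - q x := by
      intro x
      rw [← Real.log_div (hr x).ne' (hq x).ne']
      have hlog := Real.log_le_sub_one_of_pos (div_pos (hr x) (hq x))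
      calc q x * Real.log (r x / q x) ≤ q x * (r x / q x - 1) :=
            mul_le_mul_of_nonneg_left hlog (hq x).le
        _ = r x - q x := by
            rw [mul_comm, sub_mul, div_mul_cancel₀ _ (hq x).ne', one_mul]
    calc ∑ x, q x * (Real.log (r x) - Real.log (q x)) ≤ ∑ x, (r x - q x) :=
          Finset.sum_le_sum fun x _ => h1 x
      _ ≤ 0 := by rw [Finset.sum_sub_distrib]; linarith
  simp only [mul_sub] at key
  rw [← sub_nonpos, ← Finset.sum_sub_distrib]
  exact key

/-- Theorem 2, lower bound: I-W coding theorem for i.i.d. sequence sources. -/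
theorem iw_coding_sequence_lower
    (N D n : ℕ) (hD : 2 ≤ D) (hn : 1 ≤ n)
    (p w : Fin N → ℝ)
    (hp : ∀ i, 0 < p i) (hpsum : ∑ i, p i = 1)
    (hw : ∀ i, 0 < w i)
    (l : (Fin n → Fin N) → ℕ)
    (hkraft : ∑ x : Fin n → Fin N, (D : ℝ) ^ (-(l x : ℝ)) ≤ 1) :
    (1 / (n : ℝ)) *
        ∑ x : Fin n → Fin N, (∏ k, p (x k)) * (∏ k, w (x k)) * (l x : ℝ) ≥
      (∑ i, p i * w i) ^ (n - 1) *
        (-∑ i, p i * w i *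
          (Real.log (p i * w i / ∑ j, p j * w j) / Real.log D)) := by
  set f : Fin N → ℝ := fun i => p i * w i with hf_def
  have hf : ∀ i, 0 < f i := fun i => mul_pos (hp i) (hw i)
  set S : ℝ := ∑ i, p i * w i with hS_def
  have hNe : Nonempty (Fin N) := by
    rcases Nat.eq_zero_or_pos N with h | h
    · exfalso; subst h; simp at hpsum
    · exact ⟨⟨0, h⟩⟩
  have hS : 0 < S :=
    Finset.sum_pos (fun i _ => hf i) Finset.univ_nonempty
  set g : (Fin n → Fin N) → ℝ := fun x => ∏ k, f (x k) with hg_def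
  have hg : ∀ x, 0 < g x := fun x => Finset.prod_pos fun k _ => hf (x k)
  have hsumg : ∑ x : Fin n → Fin N, g x = S ^ n := by
    rw [hg_def]
    rw [sum_prod_pi' (fun _ i => f i)]
    rw [Finset.prod_const, Finset.card_univ, Fintype.card_fin]
  have hD0 : (0:ℝ) < D := by positivity
  have hlogD : 0 < Real.log D := by
    apply Real.log_pos
    exact_mod_cast one_lt_two.trans_le hD
  have hn0 : (0:ℝ) < n := by exact_mod_cast hn
  set r : (Fin n → Fin N) → ℝ := fun x => S ^ n * (D:ℝ) ^ (-(l x : ℝ)) with hr_def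
  have hr : ∀ x, 0 < r x := fun x => mul_pos (pow_pos hS n) (Real.rpow_pos_of_pos hD0 _)
  have hrsum : ∑ x : Fin n → Fin N, r x ≤ ∑ x : Fin n → Fin N, g x := by
    rw [hsumg, hr_def, ← Finset.mul_sum]
    nlinarith [pow_pos hS n]
  have hgibbs := gibbs' g r hg hr hrsum
  -- compute log r
  have hlogr : ∀ x, Real.log (r x) = (n:ℝ) * Real.log S - (l x : ℝ) * Real.log D := by
    intro x
    rw [hr_def]
    rw [Real.log_mul (pow_pos hS n).ne' (Real.rpow_pos_of_pos hD0 _).ne',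
      Real.log_pow, Real.log_rpow hD0]
    ring
  -- compute ∑ g log g
  have hglogg : ∑ x : Fin n → Fin N, g x * Real.log (g x)
      = (n:ℝ) * ((∑ i, f i * Real.log (f i)) * S ^ (n-1)) := by
    have h1 : ∀ x : Fin n → Fin N, g x * Real.log (g x)
        = ∑ k : Fin n, g x * Real.log (f (x k)) := by
      intro x
      rw [hg_def]
      rw [Real.log_prod (fun k _ => (hf (x k)).ne'), Finset.mul_sum]
    simp_rw [h1]
    rw [Finset.sum_comm]
    have h2 : ∀ k : Fin n, ∑ x : Fin n → Fin N, g x * Real.log (f (x k))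
        = (∑ i, f i * Real.log (f i)) * S ^ (n-1) := by
      intro k
      exact marginal' f (fun i => Real.log (f i)) k
    simp_rw [h2]
    rw [Finset.sum_const, Finset.card_univ, Fintype.card_fin, nsmul_eq_mul]
  -- rewrite the gibbs inequality
  have hL : ∑ x : Fin n → Fin N, g x * Real.log (r x)
      = (n:ℝ) * Real.log S * S ^ n
        - Real.log D * ∑ x : Fin n → Fin N, g x * (l x : ℝ) := by
    simp_rw [hlogr]
    rw [Finset.sum_congr rfl (fun x _ => by ring :
      ∀ x ∈ Finset.univ, g x * ((n:ℝ) * Real.log S - (l x : ℝ) * Real.log D)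
        = (n:ℝ) * Real.log S * g x - Real.log D * (g x * (l x : ℝ)))]
    rw [Finset.sum_sub_distrib, ← Finset.mul_sum, ← Finset.mul_sum, hsumg]
  rw [hL, hglogg] at hgibbs
  -- key inequality
  have hSn : S ^ n = S ^ (n - 1) * S := by
    conv_lhs => rw [← Nat.sub_add_cancel hn]
    rw [pow_succ]
  have key : Real.log D * ∑ x : Fin n → Fin N, g x * (l x : ℝ)
      ≥ (n:ℝ) * (S ^ (n-1) * (-(∑ i, f i * Real.log (f i / S)))) := by
    have hA : ∑ i, f i * Real.log (f i / S)
        = (∑ i, f i * Real.log (f i)) - S * Real.log S := by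
      rw [Finset.sum_congr rfl (fun i _ => by
        rw [Real.log_div (hf i).ne' hS.ne']; ring :
        ∀ i ∈ Finset.univ, f i * Real.log (f i / S)
          = f i * Real.log (f i) - Real.log S * f i)]
      rw [Finset.sum_sub_distrib, ← Finset.mul_sum]
      ring_nf
      rw [show (∑ i, f i) = S from rfl]
    rw [hSn] at hgibbs
    rw [hA]
    nlinarith [hgibbs]
  -- conclude
  have hgoal2 : ∑ x : Fin n → Fin N, (∏ k, p (x k)) * (∏ k, w (x k)) * (l x : ℝ)
      = ∑ x : Fin n → Fin N, g x * (l x : ℝ) := by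
    apply Finset.sum_congr rfl
    intro x _
    rw [hg_def, ← Finset.prod_mul_distrib]
  rw [ge_iff_le, hgoal2]
  have hsd : (∑ i, p i * w i * (Real.log (p i * w i / S) / Real.log D))
      = (∑ i, f i * Real.log (f i / S)) / Real.log D := by
    rw [Finset.sum_div]
    exact Finset.sum_congr rfl fun i _ => (mul_div_assoc _ _ _).symm
  have hrhs : S ^ (n - 1) *
      (-∑ i, p i * w i * (Real.log (p i * w i / S) / Real.log D))
      = ((n:ℝ) * (S ^ (n-1) * (-(∑ i, f i * Real.log (f i / S))))) / ((n:ℝ) * Real.log D) := by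
    rw [hsd]
    field_simp
  rw [hrhs]
  rw [div_le_iff₀ (by positivity)]
  calc (n:ℝ) * (S ^ (n-1) * (-(∑ i, f i * Real.log (f i / S))))
      ≤ Real.log D * ∑ x : Fin n → Fin N, g x * (l x : ℝ) := key
    _ = 1 / (n:ℝ) * (∑ x : Fin n → Fin N, g x * (l x : ℝ)) * ((n:ℝ) * Real.log D) := by
        field_simp
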